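/- For a computably enumerable set A ⊆ ℕ: if 2^{−A} is regainingly approximable, then every computable enumeration f of A is r-good for some computable increasing function r : ℕ → ℕ. -/

import Mathlib

open Filter

noncomputable section

/-- A real is *regainingly approximable* if some computable nondecreasing rational
sequence converging to it is within `2⁻ⁿ` of it for infinitely many `n`. -/
def RegainApprox (α : ℝ) : Prop :=
  ∃ a : ℕ → ℚ, Computable a ∧ Monotone a ∧
    Tendsto (fun n => (a n : ℝ)) atTop (nhds α) ∧
    ∃ᶠ n in atTop, α - (a n : ℝ) < (2 : ℝ)⁻¹ ^ n

def LeftComputable (α : ℝ) : Prop :=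
  ∃ a : ℕ → ℚ, Computable a ∧ Monotone a ∧
    Tendsto (fun n => (a n : ℝ)) atTop (nhds α)

def ComputableReal (α : ℝ) : Prop :=
  ∃ a : ℕ → ℚ, Computable a ∧ ∀ n, |α - (a n : ℝ)| < (2 : ℝ)⁻¹ ^ n

/-- The real number `2^{-A}`. -/
def realOfSet (A : Set ℕ) : ℝ := ∑' a : A, (2 : ℝ)⁻¹ ^ ((a : ℕ) + 1)

/-- A set is regainingly approximable if it is c.e. and `2^{-A}` is regainingly approximable. -/
def RegainApproxSet (A : Set ℕ) : Prop :=
  REPred (· ∈ A) ∧ RegainApprox (realOfSet A)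

/-- `f` is an enumeration of `A`: `f k = n+1` means `n` is enumerated at stage `k`. -/
def IsEnum (f : ℕ → ℕ) (A : Set ℕ) : Prop := ∀ n, n ∈ A ↔ ∃ k, f k = n + 1

/-- The elements enumerated by `f` before stage `t`. -/
def EnumBy (f : ℕ → ℕ) (t : ℕ) : Set ℕ := {n | ∃ k < t, f k = n + 1}

/-- An enumeration `f` of `A` is `r`-good if for infinitely many `n`, all elements of
`A` below `n` are enumerated before stage `r n`. -/
def RGood (r : ℕ → ℕ) (f : ℕ → ℕ) (A : Set ℕ) : Prop :=
  ∃ᶠ n in Filter.atTop, ∀ m < n, m ∈ A → m ∈ EnumBy f (r n)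

namespace StmtAux



def nfold (u : ℕ → ℕ) : ℕ → ℕ
  | 0 => 0
  | t + 1 => nfold u t + u t

def bfold (p : ℕ → Bool) : ℕ → Bool
  | 0 => true
  | t + 1 => bfold p t && p t

def bexf (p : ℕ → Bool) : ℕ → Bool
  | 0 => false
  | t + 1 => bexf p t || p t

lemma nfold_eq_sum (u : ℕ → ℕ) (t : ℕ) : nfold u t = ∑ k ∈ Finset.range t, u k := by
  induction t with
  | zero => rfl
  | succ t ih => rw [Finset.sum_range_succ, ← ih]; rfl

lemma bfold_iff (p : ℕ → Bool) (t : ℕ) : bfold p t = true ↔ ∀ k < t, p k = true := by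
  induction t with
  | zero => simp [bfold]
  | succ t ih =>
    simp only [bfold, Bool.and_eq_true, ih, Nat.lt_succ_iff_lt_or_eq]
    constructor
    · rintro ⟨h1, h2⟩ k (hk | rfl) <;> [exact h1 k hk; exact h2]
    · intro h; exact ⟨fun k hk => h k (Or.inl hk), h t (Or.inr rfl)⟩

lemma bexf_iff (p : ℕ → Bool) (t : ℕ) : bexf p t = true ↔ ∃ k < t, p k = true := by
  induction t with
  | zero => simp [bexf]
  | succ t ih =>
    simp only [bexf, Bool.or_eq_true, ih]
    constructor
    · rintro (⟨k, hk, h⟩ | h)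
      · exact ⟨k, Nat.lt_succ_of_lt hk, h⟩
      · exact ⟨t, Nat.lt_succ_self t, h⟩
    · rintro ⟨k, hk, h⟩
      rcases Nat.lt_succ_iff_lt_or_eq.1 hk with hk | rfl
      · exact Or.inl ⟨k, hk, h⟩
      · exact Or.inr h

section Comp
variable {α : Type*} [Primcodable α]

lemma computable_nfold {u : α → ℕ → ℕ} (hu : Computable₂ u) :
    Computable₂ fun a t => nfold (u a) t := by
  have h : Computable fun p : α × ℕ =>
      Nat.rec (motive := fun _ => ℕ) 0 (fun y ih => ih + u p.1 y) p.2 :=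
    Computable.nat_rec Computable.snd (Computable.const 0)
      ((Primrec.nat_add.to_comp.comp
          (Computable.snd.comp Computable.snd)
          (hu.comp (Computable.fst.comp Computable.fst)
            (Computable.fst.comp Computable.snd))).to₂)
  exact h.of_eq fun p => by
    induction p.2 with
    | zero => rfl
    | succ t ih => simp only [nfold, ← ih]

lemma computable_bfold {u : α → ℕ → Bool} (hu : Computable₂ u) :
    Computable₂ fun a t => bfold (u a) t := by
  have h : Computable fun p : α × ℕ =>
      Nat.rec (motive := fun _ => Bool) true (fun y ih => ih && u p.1 y) p.2 :=
    Computable.nat_rec Computable.snd (Computable.const true)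
      (((Primrec.dom_bool₂ (· && ·)).to_comp.comp
          (Computable.snd.comp Computable.snd)
          (hu.comp (Computable.fst.comp Computable.fst)
            (Computable.fst.comp Computable.snd))).to₂)
  exact h.of_eq fun p => by
    induction p.2 with
    | zero => rfl
    | succ t ih => simp only [bfold, ← ih]

lemma computable_bexf {u : α → ℕ → Bool} (hu : Computable₂ u) :
    Computable₂ fun a t => bexf (u a) t := by
  have h : Computable fun p : α × ℕ =>
      Nat.rec (motive := fun _ => Bool) false (fun y ih => ih || u p.1 y) p.2 :=
    Computable.nat_rec Computable.snd (Computable.const false)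
      (((Primrec.dom_bool₂ (· || ·)).to_comp.comp
          (Computable.snd.comp Computable.snd)
          (hu.comp (Computable.fst.comp Computable.fst)
            (Computable.fst.comp Computable.snd))).to₂)
  exact h.of_eq fun p => by
    induction p.2 with
    | zero => rfl
    | succ t ih => simp only [bexf, ← ih]

lemma computable_pow2 : Computable fun e : ℕ => 2 ^ e := by
  have h : Computable fun e : ℕ =>
      Nat.rec (motive := fun _ => ℕ) 1 (fun _ ih => 2 * ih) e :=
    Computable.nat_rec Computable.id (Computable.const 1)
      ((Primrec.nat_double.to_comp.comp (Computable.snd.comp Computable.snd)).to₂)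
  exact h.of_eq fun e => by
    induction e with
    | zero => rfl
    | succ t ih => simp only [pow_succ, ← ih]; ring

end Comp


def iabs (i : ℕ) : ℕ := i / 2 + i % 2

lemma iabs_intEquivNat (z : ℤ) : iabs (Equiv.intEquivNat z) = z.natAbs := by
  cases z with
  | ofNat n =>
    show iabs (2 * n) = _
    simp only [iabs, Int.ofNat_eq_natCast, Int.natAbs_natCast]; omega
  | negSucc n =>
    show iabs (2 * n + 1) = _
    simp only [iabs, Int.natAbs_negSucc]; omega

/-- membership test for the range of the (old) encoding of `ℚ` -/
def pmem (n : ℕ) : Bool :=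
  decide (0 < n.unpair.2) &&
    bfold (fun e => !(decide (2 ≤ e) && decide (iabs n.unpair.1 % e = 0) &&
      decide (n.unpair.2 % e = 0))) (n.unpair.2 + 1)

lemma coprime_iff_nodiv (a d : ℕ) (hd : 0 < d) :
    Nat.Coprime a d ↔ ∀ e, 2 ≤ e → e ∣ a → e ∣ d → False := by
  constructor
  · intro h e h2 ha hdv
    have hdg := Nat.dvd_gcd ha hdv
    rw [Nat.Coprime] at h
    rw [h] at hdg
    have := Nat.le_of_dvd one_pos hdg
    omega
  · intro h
    by_contra hne
    have h0 : Nat.gcd a d ≠ 0 := by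
      intro h0
      rw [Nat.gcd_eq_zero_iff] at h0
      omega
    have hg : 2 ≤ Nat.gcd a d := by
      rcases Nat.lt_or_ge (Nat.gcd a d) 2 with h2 | h2
      · interval_cases h' : Nat.gcd a d <;> simp_all [Nat.Coprime]
      · exact h2
    exact h _ hg (Nat.gcd_dvd_left a d) (Nat.gcd_dvd_right a d)

def encOld : ℚ → ℕ := @Encodable.encode ℚ Rat.instEncodable

lemma encOld_eq (q : ℚ) : encOld q = Nat.pair (Equiv.intEquivNat q.num) q.den := rfl

lemma pmem_iff (n : ℕ) : pmem n = true ↔ n ∈ Set.range encOld := by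
  constructor
  · intro h
    rw [pmem, Bool.and_eq_true, decide_eq_true_eq, bfold_iff] at h
    obtain ⟨hd, hdiv⟩ := h
    set i := n.unpair.1 with hi
    set d := n.unpair.2 with hdd
    have hcop : Nat.Coprime (iabs i) d := by
      rw [coprime_iff_nodiv _ _ hd]
      intro e h2 ha hdvd
      have hed : e < d + 1 := Nat.lt_succ_of_le (Nat.le_of_dvd hd hdvd)
      have := hdiv e hed
      simp only [Bool.not_eq_true', Bool.and_eq_false_iff, decide_eq_false_iff_not] at this
      rcases this with ((h' | h') | h')
      · exact h' h2
      · exact h' (Nat.eq_zero_of_dvd_of_lt ha |> fun _ => (Nat.mod_eq_zero_of_dvd ha))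
      · exact h' (Nat.mod_eq_zero_of_dvd hdvd)
    set z := Equiv.intEquivNat.symm i with hz
    have hiz : Equiv.intEquivNat z = i := Equiv.apply_symm_apply _ i
    have habs : z.natAbs.Coprime d := by
      rwa [← iabs_intEquivNat z, hiz]
    refine ⟨⟨z, d, by omega, habs⟩, ?_⟩
    rw [encOld_eq]
    show Nat.pair (Equiv.intEquivNat z) d = n
    rw [hiz, hi, hdd, Nat.pair_unpair]
  · rintro ⟨q, rfl⟩
    rw [pmem, encOld_eq, Bool.and_eq_true, decide_eq_true_eq, bfold_iff]
    simp only [Nat.unpair_pair]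
    refine ⟨q.pos, fun e he => ?_⟩
    simp only [Bool.not_eq_true', Bool.and_eq_false_iff, decide_eq_false_iff_not]
    by_cases h2 : 2 ≤ e
    · by_cases ha : iabs (Equiv.intEquivNat q.num) % e = 0
      · right
        intro hdvd
        have hcop := q.reduced
        rw [iabs_intEquivNat] at ha
        rw [coprime_iff_nodiv _ _ q.pos] at hcop
        exact hcop e h2 (Nat.dvd_of_mod_eq_zero ha) (Nat.dvd_of_mod_eq_zero hdvd)
      · left; right; exact ha
    · left; left; exact h2


noncomputable def eA : ℚ → ℕ := @Encodable.encode ℚ (Primcodable.toEncodable)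

def cnt (v : ℕ) : ℕ := nfold (fun m => cond (pmem m) 1 0) v

lemma cnt_succ (v : ℕ) : cnt (v + 1) = cnt v + cond (pmem v) 1 0 := rfl

lemma cnt_eq_countP (P : ℕ → Bool) (hP : ∀ m, pmem m = P m) (v : ℕ) :
    cnt v = (List.range v).countP P := by
  induction v with
  | zero => rfl
  | succ v ih =>
    rw [List.range_succ, List.countP_append, cnt_succ, ih, hP v]
    rcases h' : P v <;> simp [h', List.countP_cons]

lemma cnt_encOld (q : ℚ) : cnt (encOld q) = eA q := by
  rw [cnt_eq_countP (fun m => @decide (m ∈ Set.range (@Encodable.encode ℚ Rat.instEncodable))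
      (@Encodable.decidableRangeEncode ℚ Rat.instEncodable m))]
  · rfl
  · intro m
    by_cases h : pmem m = true
    · rw [h]
      exact (@decide_eq_true (m ∈ Set.range (@Encodable.encode ℚ Rat.instEncodable))
        (@Encodable.decidableRangeEncode ℚ Rat.instEncodable m) ((pmem_iff m).1 h)).symm
    · rw [Bool.not_eq_true] at h
      rw [h, eq_comm]
      rw [show (@decide (m ∈ Set.range (@Encodable.encode ℚ Rat.instEncodable))
          (@Encodable.decidableRangeEncode ℚ Rat.instEncodable m) = false) ↔
          ¬ (m ∈ Set.range (@Encodable.encode ℚ Rat.instEncodable)) from decide_eq_false_iff_not]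
      intro hm
      have := (pmem_iff m).2 hm
      rw [h] at this
      exact Bool.false_ne_true this

def gB (n v : ℕ) : Bool := pmem v && decide (cnt v = n)

lemma hexB (n : ℕ) : ∃ v, gB n v = true := by
  refine ⟨encOld (Denumerable.ofNat ℚ n), ?_⟩
  rw [gB, Bool.and_eq_true, (pmem_iff _), decide_eq_true_eq, cnt_encOld]
  exact ⟨⟨_, rfl⟩, Denumerable.encode_ofNat n⟩

noncomputable def gfun (n : ℕ) : ℕ := Nat.find (hexB n)

lemma cnt_mono : Monotone cnt := by
  apply monotone_nat_of_le_succ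
  intro v
  rw [cnt_succ]
  exact Nat.le_add_right _ _

lemma cnt_lt_cnt {u v : ℕ} (hu : pmem u = true) (huv : u < v) : cnt u < cnt v := by
  have h1 : cnt u < cnt (u + 1) := by rw [cnt_succ, hu]; simp
  exact lt_of_lt_of_le h1 (cnt_mono huv)

lemma gfun_encode (q : ℚ) : gfun (eA q) = encOld q := by
  have hv : gB (eA q) (encOld q) = true := by
    rw [gB, Bool.and_eq_true, (pmem_iff _), decide_eq_true_eq, cnt_encOld]
    exact ⟨⟨q, rfl⟩, rfl⟩
  have h1 : gfun (eA q) ≤ encOld q := Nat.find_min' (hexB _) hv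
  rcases Nat.lt_or_ge (gfun (eA q)) (encOld q) with h | h
  · exfalso
    have hspec : gB (eA q) (gfun (eA q)) = true := Nat.find_spec (hexB _)
    rw [gB, Bool.and_eq_true, decide_eq_true_eq] at hspec
    obtain ⟨hp, hc⟩ := hspec
    have := cnt_lt_cnt hp h
    rw [hc, cnt_encOld] at this
    exact lt_irrefl _ this
  · omega


/-! ### computability of the decoding helpers -/

lemma primrec_iabs : Primrec iabs :=
  Primrec.nat_add.comp (Primrec.nat_div.comp Primrec.id (Primrec.const 2))
    (Primrec.nat_mod.comp Primrec.id (Primrec.const 2))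

lemma computable_pmem : Computable pmem := by
  have hu1 : Primrec fun n : ℕ => n.unpair.1 := Primrec.fst.comp Primrec.unpair
  have hu2 : Primrec fun n : ℕ => n.unpair.2 := Primrec.snd.comp Primrec.unpair
  have d1 : Primrec fun p : ℕ × ℕ => decide (2 ≤ p.2) :=
    (Primrec.nat_le.comp (Primrec.const 2) Primrec.snd).decide
  have d2 : Primrec fun p : ℕ × ℕ => decide (iabs p.1.unpair.1 % p.2 = 0) :=
    (Primrec.eq.comp
      (Primrec.nat_mod.comp (primrec_iabs.comp (hu1.comp Primrec.fst)) Primrec.snd)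
      (Primrec.const 0)).decide
  have d3 : Primrec fun p : ℕ × ℕ => decide (p.1.unpair.2 % p.2 = 0) :=
    (Primrec.eq.comp (Primrec.nat_mod.comp (hu2.comp Primrec.fst) Primrec.snd)
      (Primrec.const 0)).decide
  have hinner : Primrec₂ fun (n e : ℕ) =>
      !(decide (2 ≤ e) && decide (iabs n.unpair.1 % e = 0) && decide (n.unpair.2 % e = 0)) :=
    (Primrec.dom_bool (fun b => !b)).comp
      (((Primrec.dom_bool₂ (· && ·)).comp ((Primrec.dom_bool₂ (· && ·)).comp d1 d2) d3))
  have hb : Computable₂ fun (n t : ℕ) => bfold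
      (fun e => !(decide (2 ≤ e) && decide (iabs n.unpair.1 % e = 0) &&
        decide (n.unpair.2 % e = 0))) t :=
    computable_bfold hinner.to_comp
  have d0 : Primrec fun n : ℕ => decide (0 < n.unpair.2) :=
    (Primrec.nat_lt.comp (Primrec.const 0) hu2).decide
  exact ((Primrec.dom_bool₂ (· && ·)).to_comp.comp d0.to_comp
    (hb.comp Computable.id (Primrec.succ.comp hu2).to_comp))

lemma computable_cnt : Computable cnt := by
  have hu : Computable₂ fun (_ : ℕ) (m : ℕ) => (cond (pmem m) 1 0 : ℕ) :=
    Computable.cond (computable_pmem.comp Computable.snd) (Computable.const 1)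
      (Computable.const 0)
  exact ((computable_nfold hu).comp Computable.id Computable.id : Computable _)

lemma computable_gfun : Computable gfun := by
  have hgB : Computable₂ gB :=
    ((Primrec.dom_bool₂ (· && ·)).to_comp.comp
      (computable_pmem.comp Computable.snd)
      ((Primrec.eq.decide.to_comp).comp (computable_cnt.comp Computable.snd) Computable.fst))
  have hp : Partrec₂ fun (n v : ℕ) => (Part.some (gB n v) : Part Bool) := by
    have := hgB.partrec₂
    exact this
  have hr : Partrec fun n => Nat.rfind fun v => (Part.some (gB n v) : Part Bool) :=
    Partrec.rfind hp
  apply hr.of_eq_tot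
  intro n
  refine Nat.mem_rfind.2 ?_
  constructor
  · exact Part.mem_some_iff.2 (Nat.find_spec (hexB n)).symm
  · intro m hm
    exact Part.mem_some_iff.2 (Bool.not_eq_true _ |>.mp (Nat.find_min (hexB n) hm)).symm


lemma mod2_intEquivNat (z : ℤ) : Equiv.intEquivNat z % 2 = 1 ↔ z < 0 := by
  cases z with
  | ofNat n =>
    show 2 * n % 2 = 1 ↔ _
    simp only [Nat.mul_mod_right]
    constructor
    · omega
    · intro h
      exact absurd h (Int.not_lt.2 (Int.ofNat_nonneg n))
  | negSucc n =>
    show (2 * n + 1) % 2 = 1 ↔ _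
    simp only [Int.negSucc_lt_zero, iff_true]
    omega

def Mf (f : ℕ → ℕ) (t : ℕ) : ℕ := 1 + nfold f t
def memB (f : ℕ → ℕ) (m t : ℕ) : Bool := bexf (fun k => decide (f k = m + 1)) t
def Nf (f : ℕ → ℕ) (t : ℕ) : ℕ :=
  nfold (fun m => cond (memB f m t) (2 ^ (Mf f t - (m + 1))) 0) (Mf f t)
def Fq (f : ℕ → ℕ) (t : ℕ) : Finset ℕ := (((Finset.range t).image f).erase 0).image (· - 1)
def sig (f : ℕ → ℕ) (t : ℕ) : ℚ := ∑ m ∈ Fq f t, (2 : ℚ)⁻¹ ^ (m + 1)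

lemma mem_Fq {f : ℕ → ℕ} {t m : ℕ} : m ∈ Fq f t ↔ ∃ k < t, f k = m + 1 := by
  simp only [Fq, Finset.mem_image, Finset.mem_erase, Finset.mem_range]
  constructor
  · rintro ⟨v, ⟨hv0, k, hk, rfl⟩, rfl⟩
    exact ⟨k, hk, by omega⟩
  · rintro ⟨k, hk, hfk⟩
    exact ⟨m + 1, ⟨by omega, k, hk, hfk⟩, by omega⟩

lemma memB_iff {f : ℕ → ℕ} {m t : ℕ} : memB f m t = true ↔ ∃ k < t, f k = m + 1 := by
  rw [memB, bexf_iff]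
  simp

lemma Fq_bound {f : ℕ → ℕ} {t m : ℕ} (h : m ∈ Fq f t) : m + 1 < Mf f t := by
  rw [mem_Fq] at h
  obtain ⟨k, hk, hfk⟩ := h
  have : f k ≤ ∑ j ∈ Finset.range t, f j :=
    Finset.single_le_sum (fun i _ => Nat.zero_le _) (Finset.mem_range.2 hk)
  rw [Mf, nfold_eq_sum]
  omega

lemma Fq_mono {f : ℕ → ℕ} : Monotone (Fq f) := by
  intro s t hst m hm
  rw [mem_Fq] at hm ⊢
  obtain ⟨k, hk, h⟩ := hm
  exact ⟨k, lt_of_lt_of_le hk hst, h⟩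

lemma sig_mono {f : ℕ → ℕ} : Monotone (sig f) := fun s t hst =>
  Finset.sum_le_sum_of_subset_of_nonneg (Fq_mono hst) (fun _ _ _ => by positivity)

lemma Nf_cast {f : ℕ → ℕ} (t : ℕ) : (Nf f t : ℚ) = sig f t * 2 ^ (Mf f t) := by
  have h1 : Nf f t = ∑ m ∈ Fq f t, 2 ^ (Mf f t - (m + 1)) := by
    rw [Nf, nfold_eq_sum]
    rw [show (fun m => cond (memB f m t) (2 ^ (Mf f t - (m + 1))) 0) =
        (fun m => if m ∈ Fq f t then 2 ^ (Mf f t - (m + 1)) else 0) from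
      funext fun m => by
        by_cases h : m ∈ Fq f t
        · rw [if_pos h, show memB f m t = true from memB_iff.2 (mem_Fq.1 h)]; rfl
        · rw [if_neg h, show memB f m t = false from by
            rw [← Bool.not_eq_true, memB_iff]; exact fun hc => h (mem_Fq.2 hc)]; rfl]
    rw [← Finset.sum_filter]
    congr 1
    apply Finset.ext
    intro m
    simp only [Finset.mem_filter, Finset.mem_range]
    exact ⟨fun h => h.2, fun h => ⟨by have := Fq_bound h; omega, h⟩⟩
  rw [h1, sig, Finset.sum_mul]
  push_cast
  apply Finset.sum_congr rfl
  intro m hm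
  have hb : m + 1 ≤ Mf f t := le_of_lt (Fq_bound hm)
  rw [inv_pow, inv_mul_eq_div, eq_div_iff (by positivity), ← pow_add]
  rw [Nat.sub_add_cancel hb]


noncomputable def Bb (f : ℕ → ℕ) (a : ℕ → ℚ) (n t : ℕ) : Bool :=
  decide ((gfun (eA (a n))).unpair.1 % 2 = 1) ||
    decide (iabs (gfun (eA (a n))).unpair.1 * 2 ^ n * 2 ^ (Mf f t) <
      Nf f t * (gfun (eA (a n))).unpair.2 * 2 ^ n + (gfun (eA (a n))).unpair.2 * 2 ^ (Mf f t))

lemma rat_ineq_iff (q σ : ℚ) (N M n : ℕ) (hσ : (N : ℚ) = σ * 2 ^ M) :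
    (q.num < 0 ∨ q.num.natAbs * 2 ^ n * 2 ^ M < N * q.den * 2 ^ n + q.den * 2 ^ M) ↔
      (q - (2 : ℚ)⁻¹ ^ n < σ) := by
  set d := q.den with hd
  set p := q.num with hp
  have hd0 : 0 < d := q.pos
  have hdq : (0:ℚ) < (d:ℚ) := by exact_mod_cast hd0
  have hnq : (0:ℚ) < 2 ^ n := by positivity
  have hMq : (0:ℚ) < 2 ^ M := by positivity
  have hsig : σ = (N : ℚ) / 2 ^ M := by
    rw [eq_div_iff (ne_of_gt hMq), ← hσ]
  have hqval : q = (p : ℚ) / (d : ℚ) := by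
    rw [hp, hd]
    exact (Rat.num_div_den q).symm
  have key : (q - (2:ℚ)⁻¹ ^ n < σ) ↔
      ((p : ℤ) * 2 ^ n * 2 ^ M < (N : ℤ) * d * 2 ^ n + d * 2 ^ M) := by
    rw [hsig, hqval]
    rw [show (2:ℚ)⁻¹ ^ n = 1 / 2 ^ n by rw [inv_pow, one_div]]
    rw [div_sub_div _ _ (ne_of_gt hdq) (ne_of_gt hnq), div_lt_div_iff₀ (by positivity) hMq]
    rw [show ((p:ℚ) * 2 ^ n - (d:ℚ) * 1) * 2 ^ M = (p:ℚ) * 2^n * 2^M - d * 2^M by ring]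
    rw [sub_lt_iff_lt_add]
    rw [show (N:ℚ) * ((d:ℚ) * 2 ^ n) = (N:ℚ) * d * 2^n by ring]
    constructor
    · intro h
      exact_mod_cast h
    · intro h
      exact_mod_cast h
  rw [key]
  constructor
  · rintro (hneg | hlt)
    · calc (p : ℤ) * 2 ^ n * 2 ^ M < 0 := by
            apply mul_neg_of_neg_of_pos (mul_neg_of_neg_of_pos hneg (by positivity)) (by positivity)
        _ ≤ (N : ℤ) * d * 2 ^ n + d * 2 ^ M := by positivity
    · have hle : (p : ℤ) ≤ (p.natAbs : ℤ) := Int.le_natAbs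
      have hlt' : ((p.natAbs : ℤ)) * 2 ^ n * 2 ^ M < (N : ℤ) * d * 2 ^ n + d * 2 ^ M := by
        exact_mod_cast hlt
      calc (p : ℤ) * 2 ^ n * 2 ^ M ≤ (p.natAbs : ℤ) * 2 ^ n * 2 ^ M := by
            apply mul_le_mul_of_nonneg_right
              (mul_le_mul_of_nonneg_right hle (by positivity)) (by positivity)
        _ < _ := hlt'
  · intro h
    rcases lt_or_ge p 0 with hneg | hpos
    · exact Or.inl hneg
    · right
      have hnab : ((p.natAbs : ℤ)) = p := Int.natAbs_of_nonneg hpos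
      have h' : (p.natAbs : ℤ) * 2 ^ n * 2 ^ M < (N : ℤ) * d * 2 ^ n + d * 2 ^ M := by
        rw [hnab]; exact h
      exact_mod_cast h'

lemma Bb_iff (f : ℕ → ℕ) (a : ℕ → ℚ) (n t : ℕ) :
    Bb f a n t = true ↔ a n - (2 : ℚ)⁻¹ ^ n < sig f t := by
  set q := a n with hq
  have h1 : (gfun (eA q)).unpair.1 = Equiv.intEquivNat q.num := by
    rw [gfun_encode, encOld_eq, Nat.unpair_pair]
  have h2 : (gfun (eA q)).unpair.2 = q.den := by
    rw [gfun_encode, encOld_eq, Nat.unpair_pair]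
  rw [Bb, ← hq, h1, h2, Bool.or_eq_true, decide_eq_true_eq, decide_eq_true_eq,
    mod2_intEquivNat, iabs_intEquivNat]
  exact rat_ineq_iff q (sig f t) (Nf f t) (Mf f t) n (Nf_cast t)

lemma computable_find {p : ℕ → ℕ → Bool} (hp : Computable₂ p) (hex : ∀ n, ∃ t, p n t = true) :
    Computable fun n => Nat.find (hex n) := by
  have hpp : Partrec₂ fun (n v : ℕ) => (Part.some (p n v) : Part Bool) := hp.partrec₂
  have hr : Partrec fun n => Nat.rfind fun v => (Part.some (p n v) : Part Bool) :=
    Partrec.rfind hpp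
  apply hr.of_eq_tot
  intro n
  refine Nat.mem_rfind.2 ?_
  refine ⟨Part.mem_some_iff.2 (Nat.find_spec (hex n)).symm, fun hm => ?_⟩
  exact Part.mem_some_iff.2 (Bool.not_eq_true _ |>.mp (Nat.find_min (hex n) hm)).symm

lemma computable_Bb {f : ℕ → ℕ} {a : ℕ → ℚ} (hf : Computable f) (ha : Computable a) :
    Computable₂ (Bb f a) := by
  have hc : Computable fun n => gfun (eA (a n)) :=
    computable_gfun.comp (Computable.encode.comp ha)
  have hc1 : Computable fun n => (gfun (eA (a n))).unpair.1 :=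
    (Primrec.fst.comp Primrec.unpair).to_comp.comp hc
  have hc2 : Computable fun n => (gfun (eA (a n))).unpair.2 :=
    (Primrec.snd.comp Primrec.unpair).to_comp.comp hc
  have hnf : Computable fun t => nfold f t := by
    have h0 : Computable₂ fun (_ : ℕ) (k : ℕ) => f k := (hf.comp Computable.snd).to₂
    exact (computable_nfold h0).comp Computable.id Computable.id
  have hMf : Computable (Mf f) := Primrec.nat_add.to_comp.comp (Computable.const 1) hnf
  have hub : Computable₂ fun (pr : ℕ × ℕ) (k : ℕ) => decide (f k = pr.2 + 1) :=
    Primrec.eq.decide.to_comp.comp (hf.comp Computable.snd)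
      (Primrec.succ.to_comp.comp (Computable.snd.comp Computable.fst))
  have hmB : Computable fun p : ℕ × ℕ => memB f p.2 p.1 :=
    (computable_bexf hub).comp Computable.id Computable.fst
  have hthen : Computable fun p : ℕ × ℕ => 2 ^ (Mf f p.1 - (p.2 + 1)) :=
    computable_pow2.comp (Primrec.nat_sub.to_comp.comp (hMf.comp Computable.fst)
      (Primrec.succ.to_comp.comp Computable.snd))
  have hu : Computable₂ fun (t m : ℕ) => (cond (memB f m t) (2 ^ (Mf f t - (m + 1))) 0 : ℕ) :=
    Computable.cond hmB hthen (Computable.const 0)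
  have hNf : Computable (Nf f) := (computable_nfold hu).comp Computable.id hMf
  have b1 : Computable fun p : ℕ × ℕ => decide ((gfun (eA (a p.1))).unpair.1 % 2 = 1) :=
    Primrec.eq.decide.to_comp.comp
      (Primrec.nat_mod.to_comp.comp (hc1.comp Computable.fst) (Computable.const 2))
      (Computable.const 1)
  have hA1 : Computable fun p : ℕ × ℕ =>
      iabs (gfun (eA (a p.1))).unpair.1 * 2 ^ p.1 * 2 ^ (Mf f p.2) :=
    Primrec.nat_mul.to_comp.comp
      (Primrec.nat_mul.to_comp.comp (primrec_iabs.to_comp.comp (hc1.comp Computable.fst))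
        (computable_pow2.comp Computable.fst))
      (computable_pow2.comp (hMf.comp Computable.snd))
  have hA2 : Computable fun p : ℕ × ℕ =>
      Nf f p.2 * (gfun (eA (a p.1))).unpair.2 * 2 ^ p.1 +
        (gfun (eA (a p.1))).unpair.2 * 2 ^ (Mf f p.2) :=
    Primrec.nat_add.to_comp.comp
      (Primrec.nat_mul.to_comp.comp
        (Primrec.nat_mul.to_comp.comp (hNf.comp Computable.snd) (hc2.comp Computable.fst))
        (computable_pow2.comp Computable.fst))
      (Primrec.nat_mul.to_comp.comp (hc2.comp Computable.fst)
        (computable_pow2.comp (hMf.comp Computable.snd)))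
  have b2 : Computable fun p : ℕ × ℕ =>
      decide (iabs (gfun (eA (a p.1))).unpair.1 * 2 ^ p.1 * 2 ^ (Mf f p.2) <
        Nf f p.2 * (gfun (eA (a p.1))).unpair.2 * 2 ^ p.1 +
          (gfun (eA (a p.1))).unpair.2 * 2 ^ (Mf f p.2)) :=
    Primrec.nat_lt.decide.to_comp.comp hA1 hA2
  exact (Primrec.dom_bool₂ (· || ·)).to_comp.comp b1 b2

end StmtAux

/-- If `2^{-A}` is regainingly approximable then every computable enumeration of `A`
is `r`-good for some computable increasing `r`. -/
theorem stmt_9 (A : Set ℕ) (hA : REPred (· ∈ A))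
    (h : RegainApprox (realOfSet A)) :
    ∀ f : ℕ → ℕ, Computable f → IsEnum f A →
      ∃ r : ℕ → ℕ, Computable r ∧ StrictMono r ∧ RGood r f A := by
  classical
  obtain ⟨a, ha_comp, ha_mono, ha_lim, ha_freq⟩ := h
  intro f hf hEnum
  set α := realOfSet A with hα
  set s : ℕ → ℝ := fun m => (2 : ℝ)⁻¹ ^ (m + 1) with hs_def
  have hs_sum : Summable s := by
    have h0 : Summable fun m : ℕ => (2 : ℝ)⁻¹ ^ m :=
      summable_geometric_of_lt_one (by norm_num) (by norm_num)
    have := h0.mul_right (2 : ℝ)⁻¹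
    apply this.congr
    intro m
    simp [hs_def, pow_succ]
  have h_ind : α = ∑' n, Set.indicator A s n := by
    rw [hα, realOfSet]
    exact tsum_subtype A s
  have hsum_le : ∀ F : Finset ℕ, (↑F : Set ℕ) ⊆ A → (∑ m ∈ F, s m) ≤ α := by
    intro F hF
    rw [h_ind]
    rw [Finset.sum_congr rfl
      (fun m hm => (Set.indicator_of_mem (hF hm) s).symm : ∀ m ∈ F, s m = Set.indicator A s m)]
    exact Summable.sum_le_tsum F (fun i _ => Set.indicator_nonneg (fun x _ => by positivity) i)
      (hs_sum.indicator A)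
  have hFqA : ∀ t, (↑(StmtAux.Fq f t) : Set ℕ) ⊆ A := by
    intro t m hm
    rw [Finset.mem_coe, StmtAux.mem_Fq] at hm
    obtain ⟨k, _, hk⟩ := hm
    exact (hEnum m).2 ⟨k, hk⟩
  have hsig_real : ∀ t, ((StmtAux.sig f t : ℚ) : ℝ) = ∑ m ∈ StmtAux.Fq f t, s m := by
    intro t
    rw [StmtAux.sig]
    push_cast
    rfl
  have hstage : ∀ N : ℕ, ∃ t, ∀ m < N, m ∈ A → ∃ k < t, f k = m + 1 := by
    intro N
    induction N with
    | zero => exact ⟨0, fun m hm => absurd hm (Nat.not_lt_zero m)⟩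
    | succ N ih =>
      obtain ⟨t, ht⟩ := ih
      by_cases hN : N ∈ A
      · obtain ⟨k, hk⟩ := (hEnum N).1 hN
        refine ⟨max t (k + 1), fun m hm hmA => ?_⟩
        rcases Nat.lt_succ_iff_lt_or_eq.1 hm with hm | rfl
        · obtain ⟨j, hj, hjf⟩ := ht m hm hmA
          exact ⟨j, lt_of_lt_of_le hj (le_max_left _ _), hjf⟩
        · exact ⟨k, lt_of_lt_of_le (Nat.lt_succ_self k) (le_max_right _ _), hk⟩
      · refine ⟨t, fun m hm hmA => ?_⟩
        rcases Nat.lt_succ_iff_lt_or_eq.1 hm with hm | rfl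
        · exact ht m hm hmA
        · exact absurd hmA hN
  have hexceed : ∀ c : ℝ, c < α → ∃ t, c < ((StmtAux.sig f t : ℚ) : ℝ) := by
    intro c hc
    have hhs : HasSum (Set.indicator A s) α := by
      rw [h_ind]
      exact (hs_sum.indicator A).hasSum
    have htend := hhs.tendsto_sum_nat
    have hev : ∀ᶠ N in atTop, c < ∑ i ∈ Finset.range N, Set.indicator A s i :=
      htend.eventually (lt_mem_nhds hc)
    obtain ⟨N, hN⟩ := hev.exists
    obtain ⟨t, ht⟩ := hstage N
    refine ⟨t, lt_of_lt_of_le hN ?_⟩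
    rw [hsig_real]
    have h1 : ∑ i ∈ Finset.range N, Set.indicator A s i =
        ∑ i ∈ (Finset.range N).filter (· ∈ A), s i := by
      rw [Finset.sum_filter]
      apply Finset.sum_congr rfl
      intro i _
      by_cases hi : i ∈ A
      · rw [if_pos hi, Set.indicator_of_mem hi]
      · rw [if_neg hi, Set.indicator_of_notMem hi]
    rw [h1]
    apply Finset.sum_le_sum_of_subset_of_nonneg
    · intro m hm
      rw [Finset.mem_filter, Finset.mem_range] at hm
      exact StmtAux.mem_Fq.2 (ht m hm.1 hm.2)
    · intro i _ _
      positivity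
  have ha_le : ∀ n, ((a n : ℚ) : ℝ) ≤ α := by
    have hmono : Monotone fun n => ((a n : ℚ) : ℝ) := fun i j hij =>
      Rat.cast_le.2 (ha_mono hij)
    exact fun n => hmono.ge_of_tendsto ha_lim n
  have hex : ∀ n, ∃ t, StmtAux.Bb f a n t = true := by
    intro n
    have hpos : (0 : ℝ) < (2 : ℝ)⁻¹ ^ n := by positivity
    have h1 : ((a n : ℚ) : ℝ) - (2 : ℝ)⁻¹ ^ n < α := by linarith [ha_le n]
    obtain ⟨t, ht⟩ := hexceed _ h1
    refine ⟨t, (StmtAux.Bb_iff f a n t).2 ?_⟩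
    rw [show ((a n : ℚ) : ℝ) - (2 : ℝ)⁻¹ ^ n = (((a n - (2 : ℚ)⁻¹ ^ n : ℚ)) : ℝ) by
      push_cast; ring] at ht
    exact_mod_cast ht
  set T : ℕ → ℕ := fun n => Nat.find (hex n) with hT
  have hTspec : ∀ n, a n - (2 : ℚ)⁻¹ ^ n < StmtAux.sig f (T n) := fun n =>
    (StmtAux.Bb_iff f a n (T n)).1 (Nat.find_spec (hex n))
  have hTmono : Monotone T := by
    apply monotone_nat_of_le_succ
    intro n
    apply Nat.find_mono
    intro t htt
    rw [StmtAux.Bb_iff] at htt ⊢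
    have hm1 : a n ≤ a (n + 1) := ha_mono (Nat.le_succ n)
    have hp : (2 : ℚ)⁻¹ ^ (n + 1) ≤ (2 : ℚ)⁻¹ ^ n :=
      pow_le_pow_of_le_one (by norm_num) (by norm_num) (Nat.le_succ n)
    linarith
  refine ⟨fun n => T (n + 2) + n, ?_, ?_, ?_⟩
  · have hBb := StmtAux.computable_Bb hf ha_comp
    have hTc : Computable T := StmtAux.computable_find hBb hex
    exact Primrec.nat_add.to_comp.comp
      (hTc.comp (Primrec.succ.to_comp.comp (Primrec.succ.to_comp.comp Computable.id)))
      Computable.id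
  · apply strictMono_nat_of_lt_succ
    intro n
    have := hTmono (show n + 2 ≤ n + 1 + 2 by omega)
    omega
  · rw [RGood, Filter.frequently_atTop]
    intro N
    obtain ⟨n₀, hn₀N, hn₀⟩ := Filter.frequently_atTop.1 ha_freq (N + 2)
    refine ⟨n₀ - 2, by omega, ?_⟩
    intro m hm hmA
    have hn2 : n₀ - 2 + 2 = n₀ := by omega
    have hmem : m ∈ StmtAux.Fq f (T n₀) := by
      by_contra hcon
      have hins : (↑(insert m (StmtAux.Fq f (T n₀))) : Set ℕ) ⊆ A := by
        intro x hx
        rw [Finset.coe_insert] at hx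
        rcases hx with rfl | hx
        · exact hmA
        · exact hFqA _ hx
      have hsum := hsum_le _ hins
      rw [Finset.sum_insert hcon] at hsum
      have h3 : ((StmtAux.sig f (T n₀) : ℚ) : ℝ) = ∑ x ∈ StmtAux.Fq f (T n₀), s x :=
        hsig_real _
      have h4 : a n₀ - (2 : ℚ)⁻¹ ^ n₀ < StmtAux.sig f (T n₀) := hTspec n₀
      have h4' : ((a n₀ : ℚ) : ℝ) - (2 : ℝ)⁻¹ ^ n₀ < ((StmtAux.sig f (T n₀) : ℚ) : ℝ) := by
        rw [show ((a n₀ : ℚ) : ℝ) - (2 : ℝ)⁻¹ ^ n₀ = (((a n₀ - (2 : ℚ)⁻¹ ^ n₀ : ℚ)) : ℝ) by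
          push_cast; ring]
        exact_mod_cast h4
      have hm1 : m + 1 ≤ n₀ - 1 := by omega
      have h5 : (2 : ℝ)⁻¹ ^ (n₀ - 1) ≤ s m := by
        rw [hs_def]
        exact pow_le_pow_of_le_one (by norm_num) (by norm_num) hm1
      have h6 : (2 : ℝ)⁻¹ ^ (n₀ - 1) = 2 * (2 : ℝ)⁻¹ ^ n₀ := by
        rw [show n₀ = (n₀ - 1) + 1 by omega, pow_succ]
        rw [show (n₀ - 1 + 1) - 1 = n₀ - 1 by omega]
        ring
      have hsm : s m ≤ α - ((StmtAux.sig f (T n₀) : ℚ) : ℝ) := by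
        rw [h3]; linarith
      linarith
    obtain ⟨k, hk, hfk⟩ := StmtAux.mem_Fq.1 hmem
    refine ⟨k, ?_, hfk⟩
    rw [hn2]
    omega
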